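/- Let Q: L(H_n) → L(H_n) be a linear map and c ∈ ℝ. Then the gate fidelity F_Q(|φ⟩) = ⟨φ|Q(|φ⟩⟨φ|)|φ⟩ equals c for every unit vector |φ⟩ ∈ H_n if and only if P_S (T ⊗ id_n)(C_Q) P_S = c·P_S. -/

import Mathlib

open Matrix BigOperators
open scoped ComplexOrder

noncomputable section

/-- |φ⟩⟨φ| as a matrix. -/
def ketbra {n : ℕ} (φ : Fin n → ℂ) : Matrix (Fin n) (Fin n) ℂ :=
  Matrix.vecMulVec φ (star φ)

/-- Quadratic form ⟨v|M|v⟩. -/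
def qf {m : Type*} [Fintype m] (M : Matrix m m ℂ) (v : m → ℂ) : ℂ :=
  star v ⬝ᵥ M *ᵥ v

/-- Tensor (Kronecker) product of vectors |ψ⟩⊗|χ⟩. -/
def kron {n : ℕ} (ψ χ : Fin n → ℂ) : Fin n × Fin n → ℂ :=
  fun p => ψ p.1 * χ p.2

/-- Unit vector predicate. -/
def unitv {n : ℕ} (φ : Fin n → ℂ) : Prop := star φ ⬝ᵥ φ = 1

/-- Linear maps on L(H_n), represented as linear maps on n×n matrices. -/
abbrev MatMap (n : ℕ) := Matrix (Fin n) (Fin n) ℂ →ₗ[ℂ] Matrix (Fin n) (Fin n) ℂ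

/-- Choi matrix C_Λ = Σ_{i,j} |i⟩⟨j| ⊗ Λ(|i⟩⟨j|). -/
def choi {n : ℕ} (Λ : MatMap n) : Matrix (Fin n × Fin n) (Fin n × Fin n) ℂ :=
  Matrix.of fun p q => Λ (Matrix.single p.1 q.1 1) p.2 q.2

/-- Partial transpose on the first factor, i.e. (T ⊗ id_n)(M). -/
def ptA {n : ℕ} (M : Matrix (Fin n × Fin n) (Fin n × Fin n) ℂ) :
    Matrix (Fin n × Fin n) (Fin n × Fin n) ℂ :=
  Matrix.of fun p q => M (q.1, p.2) (p.1, q.2)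

/-- The flip (swap) operator F on H_n ⊗ H_n. -/
def flipOp (n : ℕ) : Matrix (Fin n × Fin n) (Fin n × Fin n) ℂ :=
  Matrix.of fun p q => if p.1 = q.2 ∧ p.2 = q.1 then 1 else 0

/-- Projection onto the symmetric subspace, P_S = (1/2)(I + F). -/
def Psym (n : ℕ) : Matrix (Fin n × Fin n) (Fin n × Fin n) ℂ :=
  (1/2 : ℂ) • (1 + flipOp n)

/-- Gate fidelity F_Λ(|φ⟩) = ⟨φ|Λ(|φ⟩⟨φ|)|φ⟩. -/
def fid {n : ℕ} (Λ : MatMap n) (φ : Fin n → ℂ) : ℂ := qf (Λ (ketbra φ)) φ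

/-- Trace preserving. -/
def IsTP {n : ℕ} (Λ : MatMap n) : Prop := ∀ X, (Λ X).trace = X.trace

/-- Completely positive (via Choi's theorem: Choi matrix PSD). -/
def IsCP {n : ℕ} (Λ : MatMap n) : Prop := (choi Λ).PosSemidef

/-- Quantum channel: completely positive and trace preserving. -/
def IsChannel {n : ℕ} (Λ : MatMap n) : Prop := IsCP Λ ∧ IsTP Λ

/-- Λd is the Hilbert–Schmidt dual of Λ : Tr(Λ(X)Y) = Tr(X Λd(Y)). -/
def IsDual {n : ℕ} (Λ Λd : MatMap n) : Prop :=
  ∀ X Y, (Λ X * Y).trace = (X * Λd Y).trace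

/-- Standard basis vector. -/
def stdV (n : ℕ) (i : Fin n) : Fin n → ℂ := Pi.single i 1

/-- The symmetric subspace S = span{|i⟩|j⟩ + |j⟩|i⟩}. -/
def Ssub (n : ℕ) : Submodule ℂ (Fin n × Fin n → ℂ) :=
  Submodule.span ℂ {v | ∃ i j, v = kron (stdV n i) (stdV n j) + kron (stdV n j) (stdV n i)}

/-- The maximally entangled state |ψ₊⟩ = (1/√n) Σ_j |jj⟩. -/
def psiPlus (n : ℕ) : Fin n × Fin n → ℂ :=
  fun p => if p.1 = p.2 then ((Real.sqrt n : ℂ))⁻¹ else 0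

open ComplexConjugate

section Aux

/- ## flip / Psym algebra -/

lemma flip_mul {n : ℕ} (A : Matrix (Fin n × Fin n) (Fin n × Fin n) ℂ) :
    flipOp n * A = Matrix.of fun p q => A (p.2, p.1) q := by
  ext p q
  simp [flipOp, Matrix.mul_apply]
  rw [Fintype.sum_prod_type]
  simp [Finset.sum_ite_eq, ite_and]

lemma mul_flip {n : ℕ} (A : Matrix (Fin n × Fin n) (Fin n × Fin n) ℂ) :
    A * flipOp n = Matrix.of fun p q => A p (q.2, q.1) := by
  ext p q
  simp [flipOp, Matrix.mul_apply]
  rw [Fintype.sum_prod_type, Finset.sum_comm]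
  simp [ite_and, Finset.sum_ite_eq, Finset.sum_ite_eq']

lemma flipOp_flipOp {n : ℕ} : flipOp n * flipOp n = 1 := by
  rw [flip_mul]
  ext p q
  simp [flipOp, Matrix.one_apply, Prod.ext_iff, and_comm]

lemma Psym_sq {n : ℕ} : Psym n * Psym n = Psym n := by
  simp only [Psym, Matrix.smul_mul, Matrix.mul_smul, add_mul, mul_add, one_mul, mul_one,
    flipOp_flipOp, smul_smul]
  ring_nf
  module

lemma Psym_sandwich {n : ℕ} (M : Matrix (Fin n × Fin n) (Fin n × Fin n) ℂ) (p q : Fin n × Fin n) :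
    (Psym n * M * Psym n) p q
      = (1/4 : ℂ) * (M p q + M (p.2, p.1) q + M p (q.2, q.1) + M (p.2, p.1) (q.2, q.1)) := by
  simp only [Psym, Matrix.smul_mul, Matrix.mul_smul, add_mul, mul_add, one_mul, mul_one,
    flip_mul, mul_flip, smul_smul]
  simp [Matrix.add_apply, Matrix.smul_apply]
  ring

lemma flip_mulVec {n : ℕ} (v : Fin n × Fin n → ℂ) :
    flipOp n *ᵥ v = fun p => v (p.2, p.1) := by
  funext p
  simp [flipOp, Matrix.mulVec, dotProduct]
  rw [Fintype.sum_prod_type]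
  simp [ite_and, Finset.sum_ite_eq, Finset.sum_ite_eq']

lemma Psym_fix {n : ℕ} (v : Fin n × Fin n → ℂ) (hv : ∀ p : Fin n × Fin n, v (p.2, p.1) = v p) :
    Psym n *ᵥ v = v := by
  funext p
  simp [Psym, Matrix.add_mulVec, Matrix.smul_mulVec, Matrix.one_mulVec, flip_mulVec, hv]
  ring

lemma Psym_transpose {n : ℕ} : (Psym n)ᵀ = Psym n := by
  ext p q
  simp only [Matrix.transpose_apply, Psym, Matrix.smul_apply, Matrix.add_apply,
    Matrix.one_apply, flipOp, Matrix.of_apply]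
  have h1 : (q = p) ↔ (p = q) := eq_comm
  have h2 : (q.1 = p.2 ∧ q.2 = p.1) ↔ (p.1 = q.2 ∧ p.2 = q.1) := by
    constructor <;> (rintro ⟨a, b⟩; exact ⟨b.symm, a.symm⟩)
  rw [if_congr h1 rfl rfl, if_congr h2 rfl rfl]

lemma dot_shift {m : Type*} [Fintype m] (A : Matrix m m ℂ) (hA : Aᵀ = A) (x y : m → ℂ) :
    (A *ᵥ x) ⬝ᵥ y = x ⬝ᵥ (A *ᵥ y) := by
  simp only [dotProduct, Matrix.mulVec, dotProduct, Finset.sum_mul, Finset.mul_sum]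
  rw [Finset.sum_comm]
  refine Finset.sum_congr rfl fun p _ => Finset.sum_congr rfl fun q _ => ?_
  have h : A q p = A p q := by conv_rhs => rw [← hA, Matrix.transpose_apply]
  rw [h]; ring

/- ## kron basics -/

lemma kron_add_left {n : ℕ} (x y z : Fin n → ℂ) : kron (x + y) z = kron x z + kron y z := by
  funext p; simp [kron]; ring

lemma kron_add_right {n : ℕ} (x y z : Fin n → ℂ) : kron x (y + z) = kron x y + kron x z := by
  funext p; simp [kron]; ring

lemma star_kron {n : ℕ} (x y : Fin n → ℂ) : star (kron x y) = kron (star x) (star y) := by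
  funext p; simp [kron]

lemma dot_kron {n : ℕ} (x y z w : Fin n → ℂ) :
    kron x y ⬝ᵥ kron z w = (x ⬝ᵥ z) * (y ⬝ᵥ w) := by
  simp only [dotProduct, kron, Fintype.sum_prod_type, Finset.sum_mul_sum]
  refine Finset.sum_congr rfl fun i _ => Finset.sum_congr rfl fun j _ => ?_
  ring

lemma kron_single {n : ℕ} (a b : Fin n) :
    kron (Pi.single a (1:ℂ)) (Pi.single b 1) = Pi.single (a, b) 1 := by
  funext p
  simp [kron, Pi.single_apply, Prod.ext_iff, ite_and]
  by_cases h1 : p.1 = a <;> by_cases h2 : p.2 = b <;> simp [h1, h2]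

lemma B_single {n : ℕ} (M : Matrix (Fin n × Fin n) (Fin n × Fin n) ℂ) (p q : Fin n × Fin n) :
    star (Pi.single p (1:ℂ)) ⬝ᵥ M *ᵥ Pi.single q 1 = M p q := by
  simp [dotProduct, Matrix.mulVec, Pi.single_apply, Pi.star_apply, Finset.sum_ite_eq,
    Finset.sum_ite_eq', apply_ite, mul_ite, ite_mul]

/- ## the fidelity identity -/

lemma ketbra_eq_sum {n : ℕ} (φ : Fin n → ℂ) :
    ketbra φ = ∑ i, ∑ j, (φ i * conj (φ j)) • Matrix.single i j (1:ℂ) := by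
  ext a b
  simp [ketbra, Matrix.vecMulVec_apply, Matrix.sum_apply, Matrix.single, ite_and,
    Finset.sum_ite_eq, Finset.sum_ite_eq']

lemma sum4_reorder {M : Type*} [Fintype M] (f : M → M → M → M → ℂ) :
    ∑ a, ∑ b, ∑ i, ∑ j, f a b i j = ∑ j, ∑ a, ∑ i, ∑ b, f a b i j := by
  conv_lhs => enter [2, a, 2, b]; rw [Finset.sum_comm]
  conv_lhs => enter [2, a]; rw [Finset.sum_comm]
  conv_lhs => enter [2, a, 2, j]; rw [Finset.sum_comm]
  rw [Finset.sum_comm]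

lemma fid_eq {n : ℕ} (Q : MatMap n) (φ : Fin n → ℂ) :
    fid Q φ = qf (ptA (choi Q)) (kron φ φ) := by
  have hQ : Q (ketbra φ)
      = ∑ i, ∑ j, (φ i * conj (φ j)) • Q (Matrix.single i j (1:ℂ)) := by
    rw [ketbra_eq_sum, map_sum]
    refine Finset.sum_congr rfl fun i _ => ?_
    rw [map_sum]
    refine Finset.sum_congr rfl fun j _ => ?_
    rw [_root_.map_smul]
  unfold fid qf
  rw [hQ]
  simp only [dotProduct, Matrix.mulVec, dotProduct, Matrix.sum_apply,
    Matrix.smul_apply, Pi.star_apply, kron, ptA, choi, Matrix.of_apply, smul_eq_mul,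
    Finset.mul_sum, Finset.sum_mul, star_mul']
  rw [Fintype.sum_prod_type]
  conv_rhs => enter [2, x, 2, y]; rw [Fintype.sum_prod_type]
  conv_lhs => enter [2, a, 2, b]; rw [Finset.sum_comm]
  conv_lhs => enter [2, a]; rw [Finset.sum_comm]
  conv_lhs => enter [2, a, 2, j]; rw [Finset.sum_comm]
  rw [Finset.sum_comm]
  refine Finset.sum_congr rfl fun j _ => ?_
  refine Finset.sum_congr rfl fun a _ => ?_
  refine Finset.sum_congr rfl fun i _ => ?_
  refine Finset.sum_congr rfl fun b _ => ?_
  simp only [Complex.star_def]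
  ring

/- ## polarization -/

lemma extract02 (x1 x2 x3 x4 x5 x6 x7 : ℂ)
    (h : ∀ t : ℂ, t * x1 + conj t * x2 + t^2 * x3 + conj t * t * x4 + conj t^2 * x5
        + conj t * t^2 * x6 + conj t^2 * t * x7 = 0) : x3 = 0 := by
  have h1 := h 1
  have h2 := h (-1)
  have h3 := h Complex.I
  have h4 := h (-Complex.I)
  have h5 := h (1 + Complex.I)
  have h6 := h (1 - Complex.I)
  have h7 := h (2 * Complex.I)
  simp only [_root_.map_one, _root_.map_neg, _root_.map_add, _root_.map_sub, _root_.map_mul, Complex.conj_I, _root_.map_ofNat]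
    at h1 h2 h3 h4 h5 h6 h7
  linear_combination (1/8 : ℂ) * h1 + (1/8 : ℂ) * h2 - (1/8 : ℂ) * h3
    + (-1/8 - Complex.I/6) * h4 - (Complex.I/8) * h5 + (Complex.I/8) * h6 + (Complex.I/24) * h7
    + ((3/4)*x3 - (1/4)*x4 - (1/4)*x5 + (Complex.I^2/4)*x6 - (Complex.I^2/4)*x7) * Complex.I_sq

lemma kron_expand {n : ℕ} (φ ψ : Fin n → ℂ) (t : ℂ) :
    kron (φ + t • ψ) (φ + t • ψ)
      = kron φ φ + t • (kron φ ψ + kron ψ φ) + t^2 • kron ψ ψ := by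
  funext p
  simp [kron]
  ring

lemma qf_expand {m : Type*} [Fintype m] (M : Matrix m m ℂ) (u w z : m → ℂ) (t : ℂ) :
    qf M (u + t • w + t^2 • z)
      = qf M u + t * (star u ⬝ᵥ M *ᵥ w) + t^2 * (star u ⬝ᵥ M *ᵥ z)
        + conj t * (star w ⬝ᵥ M *ᵥ u) + conj t * t * (star w ⬝ᵥ M *ᵥ w)
        + conj t * t^2 * (star w ⬝ᵥ M *ᵥ z)
        + conj t^2 * (star z ⬝ᵥ M *ᵥ u) + conj t^2 * t * (star z ⬝ᵥ M *ᵥ w)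
        + conj t^2 * t^2 * qf M z := by
  simp only [qf, star_add, star_smul, add_dotProduct, smul_dotProduct,
    dotProduct_add, dotProduct_smul, Matrix.mulVec_add, Matrix.mulVec_smul,
    smul_eq_mul, Complex.star_def, map_pow]
  ring

lemma qf_smul {m : Type*} [Fintype m] (M : Matrix m m ℂ) (s : ℂ) (v : m → ℂ) :
    qf M (s • v) = conj s * s * qf M v := by
  simp only [qf, star_smul, smul_dotProduct, dotProduct_smul, Matrix.mulVec_smul,
    smul_eq_mul, Complex.star_def]
  ring

lemma sesq {n : ℕ} (M : Matrix (Fin n × Fin n) (Fin n × Fin n) ℂ)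
    (H : ∀ φ, qf M (kron φ φ) = 0) (φ ψ : Fin n → ℂ) :
    star (kron φ φ) ⬝ᵥ M *ᵥ kron ψ ψ = 0 := by
  set u := kron φ φ
  set z := kron ψ ψ
  set w := kron φ ψ + kron ψ φ with hw
  refine extract02 (star u ⬝ᵥ M *ᵥ w) (star w ⬝ᵥ M *ᵥ u) _ (star w ⬝ᵥ M *ᵥ w)
    (star z ⬝ᵥ M *ᵥ u) (star w ⬝ᵥ M *ᵥ z) (star z ⬝ᵥ M *ᵥ w) (fun t => ?_)
  have h := H (φ + t • ψ)
  rw [kron_expand, qf_expand] at h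
  have h0 := H φ
  have h1 := H ψ
  linear_combination h - h0 - conj t^2 * t^2 * h1

lemma entry_claim {n : ℕ} (M : Matrix (Fin n × Fin n) (Fin n × Fin n) ℂ)
    (H : ∀ φ, qf M (kron φ φ) = 0) (p q : Fin n × Fin n) :
    M p q + M (p.2, p.1) q + M p (q.2, q.1) + M (p.2, p.1) (q.2, q.1) = 0 := by
  have key := sesq M H
  have h4 : ∀ x1 x2 y1 y2 : Fin n → ℂ,
      star (kron x1 x2 + kron x2 x1) ⬝ᵥ M *ᵥ (kron y1 y2 + kron y2 y1) = 0 := by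
    intro x1 x2 y1 y2
    have e1 := key (x1 + x2) (y1 + y2)
    have e2 := key x1 (y1 + y2)
    have e3 := key x2 (y1 + y2)
    have e4 := key (x1 + x2) y1
    have e5 := key (x1 + x2) y2
    have e6 := key x1 y1
    have e7 := key x1 y2
    have e8 := key x2 y1
    have e9 := key x2 y2
    simp only [kron_add_left, kron_add_right, star_add, add_dotProduct,
      dotProduct_add, Matrix.mulVec_add] at e1 e2 e3 e4 e5 e6 e7 e8 e9 ⊢
    linear_combination e1 - e2 - e3 - e4 - e5 + e6 + e7 + e8 + e9
  have hpq := h4 (Pi.single p.1 1) (Pi.single p.2 1) (Pi.single q.1 1) (Pi.single q.2 1)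
  simp only [kron_single, star_add, add_dotProduct, dotProduct_add,
    Matrix.mulVec_add, B_single] at hpq
  linear_combination hpq

end Aux

theorem stmt10 {n : ℕ} (Q : MatMap n) (c : ℝ) :
    (∀ φ : Fin n → ℂ, unitv φ → fid Q φ = (c : ℂ)) ↔
      Psym n * ptA (choi Q) * Psym n = (c : ℂ) • Psym n := by
  set M := ptA (choi Q) with hM
  constructor
  · intro hfid
    have H : ∀ φ : Fin n → ℂ, qf (M - (c:ℂ) • 1) (kron φ φ) = 0 := by
      intro φ
      have hq : qf (M - (c:ℂ) • 1) (kron φ φ)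
          = qf M (kron φ φ) - (c:ℂ) * (star (kron φ φ) ⬝ᵥ kron φ φ) := by
        simp [qf, Matrix.sub_mulVec, Matrix.smul_mulVec, Matrix.one_mulVec,
          dotProduct_sub, dotProduct_smul, smul_eq_mul]
      rw [hq, star_kron, dot_kron]
      by_cases hφ : φ = 0
      · subst hφ
        have : kron (0 : Fin n → ℂ) 0 = 0 := by funext p; simp [kron]
        simp [this, qf]
      · have hex : ∃ i, φ i ≠ 0 := by
          by_contra hc
          push_neg at hc
          exact hφ (funext hc)
        have hpos : 0 < ∑ i, Complex.normSq (φ i) := by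
          obtain ⟨i, hi⟩ := hex
          refine Finset.sum_pos' (fun j _ => Complex.normSq_nonneg _) ⟨i, Finset.mem_univ i, ?_⟩
          exact Complex.normSq_pos.2 hi
        set r : ℝ := Real.sqrt (∑ i, Complex.normSq (φ i)) with hr
        have hrpos : 0 < r := Real.sqrt_pos.2 hpos
        have hrne : (r : ℂ) ≠ 0 := by exact_mod_cast ne_of_gt hrpos
        have ha : star φ ⬝ᵥ φ = (r : ℂ)^2 := by
          have h1 : star φ ⬝ᵥ φ = ((∑ i, Complex.normSq (φ i) : ℝ) : ℂ) := by
            simp only [dotProduct, Pi.star_apply, Complex.star_def]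
            push_cast
            refine Finset.sum_congr rfl fun i _ => ?_
            rw [Complex.normSq_eq_conj_mul_self]
          rw [h1]
          rw [show ((r:ℝ):ℂ)^2 = (((r^2 : ℝ)) : ℂ) by push_cast; ring]
          congr 1
          rw [hr, Real.sq_sqrt hpos.le]
        have hψ : unitv ((r:ℂ)⁻¹ • φ) := by
          unfold unitv
          rw [star_smul, smul_dotProduct, dotProduct_smul, ha]
          simp only [smul_eq_mul, Complex.star_def, map_inv₀, Complex.conj_ofReal]
          field_simp
        have hfψ := hfid _ hψ
        rw [fid_eq] at hfψ
        have hkr : kron φ φ = ((r:ℂ)^2) • kron ((r:ℂ)⁻¹ • φ) ((r:ℂ)⁻¹ • φ) := by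
          funext p
          simp only [kron, Pi.smul_apply, smul_eq_mul]
          field_simp
        rw [hkr, qf_smul, hfψ, ha]
        simp only [map_pow, Complex.conj_ofReal]
        ring
    have hclaim := entry_claim _ H
    have hzero : Psym n * (M - (c:ℂ) • 1) * Psym n = 0 := by
      ext p q
      rw [Psym_sandwich, hclaim p q, mul_zero]
      simp
    have hsplit : M = (M - (c:ℂ) • 1) + (c:ℂ) • 1 := by simp
    calc Psym n * M * Psym n
        = Psym n * (M - (c:ℂ) • 1) * Psym n + (c:ℂ) • (Psym n * Psym n) := by
          conv_lhs => rw [hsplit]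
          rw [Matrix.mul_add, Matrix.add_mul]
          congr 1
          rw [Matrix.mul_smul, Matrix.smul_mul, Matrix.mul_one]
      _ = (c:ℂ) • Psym n := by rw [hzero, Psym_sq, zero_add]
  · intro hP φ hφ
    rw [fid_eq]
    set v := kron φ φ with hv
    have hsym : ∀ p : Fin n × Fin n, v (p.2, p.1) = v p := by
      intro p; simp [hv, kron]; ring
    have hfix : Psym n *ᵥ v = v := Psym_fix v hsym
    have hsfix : Psym n *ᵥ star v = star v := by
      refine Psym_fix _ fun p => ?_
      simp only [Pi.star_apply, hsym]
    calc qf M v = star v ⬝ᵥ M *ᵥ (Psym n *ᵥ v) := by rw [hfix]; rfl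
      _ = star v ⬝ᵥ (M * Psym n) *ᵥ v := by rw [Matrix.mulVec_mulVec]
      _ = (Psym n *ᵥ star v) ⬝ᵥ (M * Psym n) *ᵥ v := by rw [hsfix]
      _ = star v ⬝ᵥ (Psym n *ᵥ ((M * Psym n) *ᵥ v)) := by
          rw [dot_shift _ Psym_transpose]
      _ = star v ⬝ᵥ (Psym n * M * Psym n) *ᵥ v := by
          rw [Matrix.mulVec_mulVec, Matrix.mul_assoc]
      _ = (c:ℂ) * (star v ⬝ᵥ Psym n *ᵥ v) := by
          rw [hP, Matrix.smul_mulVec, dotProduct_smul, smul_eq_mul]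
      _ = (c:ℂ) := by
          rw [hfix, hv, star_kron, dot_kron]
          rw [show star φ ⬝ᵥ φ = 1 from hφ]
          ring
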